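/- arXiv:0912.4314 — 4 statements merged into one kernel-verified Lean document; each statement's English description precedes it below -/
import Mathlib

section
/- Let (C^•, d, δ) be a finite bi-graded complex of finite-dimensional complex vector spaces whose combinatorial Laplacian Δ_j is bijective for every j = 0, …, n. Then for every j, the composite δ_{j+1} ∘ d_j maps the subspace im δ_{j+1} ⊆ C^j to itself, the composite d_j ∘ δ_{j+1} maps the subspace im d_j ⊆ C^{j+1} to itself, and the determinants of these two restricted endomorphisms are equal: det(δ_{j+1} ∘ d_j |_{im δ_{j+1}}) = det(d_j ∘ δ_{j+1} |_{im d_j}). -/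
open Module in
lemma det_comp_comm_aux {U V : Type*} [AddCommGroup U] [AddCommGroup V]
    [Module ℂ U] [Module ℂ V] [FiniteDimensional ℂ U] [FiniteDimensional ℂ V]
    (h : finrank ℂ U = finrank ℂ V) (f : U →ₗ[ℂ] V) (g : V →ₗ[ℂ] U) :
    LinearMap.det (g ∘ₗ f) = LinearMap.det (f ∘ₗ g) := by
  let bU := finBasis ℂ U
  let bV := (finBasis ℂ V).reindex (finCongr h.symm)
  rw [← LinearMap.det_toMatrix bU, ← LinearMap.det_toMatrix bV,
    LinearMap.toMatrix_comp bU bV bU, LinearMap.toMatrix_comp bV bU bV, Matrix.det_comm]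

/-- Let `(C^•, d, δ)` be a finite bi-graded complex of finite-dimensional
complex vector spaces whose combinatorial Laplacian `Δ j` is bijective for `j = 0, …, n`
(here `δ j : C (j+1) →ₗ C j` is the paper's `δ_{j+1}`). Then for every `j = 0, …, n`,
the composite `δ_{j+1} ∘ d_j` maps `im δ_{j+1} = range (δ j) ⊆ C^j` to itself, the composite
`d_j ∘ δ_{j+1}` maps `im d_j = range (d j) ⊆ C^{j+1}` to itself, and the determinants of the
two restricted endomorphisms coincide (the determinant of the endomorphism of the zero space
being `1`, which is Mathlib's convention for `LinearMap.det`). -/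
theorem det_restricted_composites_eq_of_laplacian_bijective
    (n : ℕ) (C : ℕ → Type) [∀ j, AddCommGroup (C j)] [∀ j, Module ℂ (C j)]
    [∀ j, FiniteDimensional ℂ (C j)]
    (hC : ∀ j, n < j → Subsingleton (C j))
    (d : ∀ j, C j →ₗ[ℂ] C (j + 1)) (δ : ∀ j, C (j + 1) →ₗ[ℂ] C j)
    (hd : ∀ j, (d (j + 1)).comp (d j) = 0)
    (hδ : ∀ j, (δ j).comp (δ (j + 1)) = 0)
    (Δ : ∀ j, C j →ₗ[ℂ] C j)
    (hΔ0 : Δ 0 = (δ 0).comp (d 0))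
    (hΔsucc : ∀ j, Δ (j + 1) = (δ (j + 1)).comp (d (j + 1)) + (d j).comp (δ j))
    (hbij : ∀ j, j ≤ n → Function.Bijective ⇑(Δ j)) :
    ∀ j, j ≤ n →
      (∀ x ∈ LinearMap.range (δ j), ((δ j).comp (d j)) x ∈ LinearMap.range (δ j)) ∧
      (∀ x ∈ LinearMap.range (d j), ((d j).comp (δ j)) x ∈ LinearMap.range (d j)) ∧
      ∀ (h1 : ∀ x ∈ LinearMap.range (δ j), ((δ j).comp (d j)) x ∈ LinearMap.range (δ j))
        (h2 : ∀ x ∈ LinearMap.range (d j), ((d j).comp (δ j)) x ∈ LinearMap.range (d j)),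
        LinearMap.det (((δ j).comp (d j)).restrict h1) =
          LinearMap.det (((d j).comp (δ j)).restrict h2) := by
  intro j hj
  set P := LinearMap.range (δ j) with hP
  set Q := LinearMap.range (d j) with hQ
  have hA : ∀ x ∈ Q, δ j x ∈ P := fun x _ => ⟨x, rfl⟩
  have hB : ∀ x ∈ P, d j x ∈ Q := fun x _ => ⟨x, rfl⟩
  refine ⟨fun x hx => hA _ (hB x hx), fun x hx => hB _ (hA x hx), fun h1 h2 => ?_⟩
  -- d j is injective on range (δ j)
  have hker_d : ∀ x ∈ P, d j x = 0 → x = 0 := by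
    rintro x ⟨y, rfl⟩ hdx
    cases j with
    | zero =>
      have h0 : Δ 0 (δ 0 y) = 0 := by
        rw [hΔ0, LinearMap.comp_apply, hdx, map_zero]
      exact (hbij 0 hj).1 (by rw [h0, map_zero])
    | succ k =>
      have hδk : δ k (δ (k + 1) y) = 0 := by
        have := DFunLike.congr_fun (hδ k) y
        simpa [LinearMap.comp_apply] using this
      have h0 : Δ (k + 1) (δ (k + 1) y) = 0 := by
        rw [hΔsucc, LinearMap.add_apply, LinearMap.comp_apply, LinearMap.comp_apply,
          hdx, hδk, map_zero, map_zero, add_zero]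
      exact (hbij (k + 1) hj).1 (by rw [h0, map_zero])
  -- δ j is injective on range (d j)
  have hker_δ : ∀ x ∈ Q, δ j x = 0 → x = 0 := by
    rintro x ⟨y, rfl⟩ hδx
    by_cases hjn : j + 1 ≤ n
    · have hdd : d (j + 1) (d j y) = 0 := by
        have := DFunLike.congr_fun (hd j) y
        simpa [LinearMap.comp_apply] using this
      have h0 : Δ (j + 1) (d j y) = 0 := by
        rw [hΔsucc, LinearMap.add_apply, LinearMap.comp_apply, LinearMap.comp_apply,
          hdd, hδx, map_zero, map_zero, add_zero]
      exact (hbij (j + 1) hjn).1 (by rw [h0, map_zero])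
    · have := hC (j + 1) (not_le.1 hjn)
      exact Subsingleton.elim _ _
  -- the restricted maps between the two ranges
  have hinjB : Function.Injective ((d j).restrict hB) := by
    intro x y hxy
    have h0 : d j ((x : C j) - y) = 0 := by
      have := congrArg Subtype.val hxy
      simp only [LinearMap.restrict_apply] at this
      simp [map_sub, this]
    exact Subtype.ext (sub_eq_zero.1 (hker_d _ (P.sub_mem x.2 y.2) h0))
  have hinjA : Function.Injective ((δ j).restrict hA) := by
    intro x y hxy
    have h0 : δ j ((x : C (j + 1)) - y) = 0 := by
      have := congrArg Subtype.val hxy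
      simp only [LinearMap.restrict_apply] at this
      simp [map_sub, this]
    exact Subtype.ext (sub_eq_zero.1 (hker_δ _ (Q.sub_mem x.2 y.2) h0))
  have hrank : Module.finrank ℂ P = Module.finrank ℂ Q :=
    le_antisymm (LinearMap.finrank_le_finrank_of_injective hinjB)
      (LinearMap.finrank_le_finrank_of_injective hinjA)
  have e1 : ((δ j).comp (d j)).restrict h1 =
      ((δ j).restrict hA).comp ((d j).restrict hB) := rfl
  have e2 : ((d j).comp (δ j)).restrict h2 =
      ((d j).restrict hB).comp ((δ j).restrict hA) := rfl
  rw [e1, e2]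
  exact det_comp_comm_aux hrank ((d j).restrict hB) ((δ j).restrict hA)
end

section
/- Let (C^•, d, δ) be a finite bi-graded complex of finite-dimensional complex vector spaces whose combinatorial Laplacian Δ_j is bijective for every j = 0, …, n. Then for every j, det(Δ_j) = det(d_{j−1} ∘ δ_j |_{im d_{j−1}}) · det(δ_{j+1} ∘ d_j |_{im δ_{j+1}}), where both composites preserve the indicated subspaces and the determinant over the zero subspace is 1. -/
private lemma detProdMap {M N : Type} [AddCommGroup M] [Module ℂ M] [FiniteDimensional ℂ M]
    [AddCommGroup N] [Module ℂ N] [FiniteDimensional ℂ N]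
    (f : M →ₗ[ℂ] M) (g : N →ₗ[ℂ] N) :
    LinearMap.det (f.prodMap g) = LinearMap.det f * LinearMap.det g := by
  classical
  let b₁ := Module.finBasis ℂ M
  let b₂ := Module.finBasis ℂ N
  rw [← LinearMap.det_toMatrix (b₁.prod b₂), LinearMap.toMatrix_prodMap,
    Matrix.det_fromBlocks_zero₁₂, LinearMap.det_toMatrix, LinearMap.det_toMatrix]

private lemma detRestrictTop {E : Type} [AddCommGroup E] [Module ℂ E] [FiniteDimensional ℂ E]
    {p : Submodule ℂ E} (htop : p = ⊤) (f : E →ₗ[ℂ] E)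
    (hp : ∀ x ∈ p, f x ∈ p) : LinearMap.det (f.restrict hp) = LinearMap.det f := by
  let e := LinearEquiv.ofTop p htop
  have hf : f = (e : p →ₗ[ℂ] E) ∘ₗ (f.restrict hp) ∘ₗ (e.symm : E →ₗ[ℂ] p) := by
    ext x
    simp [e, LinearMap.restrict_apply]
  conv_rhs => rw [hf, LinearMap.det_conj]

private lemma detIsCompl {E : Type} [AddCommGroup E] [Module ℂ E] [FiniteDimensional ℂ E]
    {p q : Submodule ℂ E} (hpq : IsCompl p q) (f : E →ₗ[ℂ] E)
    (hp : ∀ x ∈ p, f x ∈ p) (hq : ∀ x ∈ q, f x ∈ q) :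
    LinearMap.det f = LinearMap.det (f.restrict hp) * LinearMap.det (f.restrict hq) := by
  let e := Submodule.prodEquivOfIsCompl p q hpq
  have hf : f = (e : p × q →ₗ[ℂ] E) ∘ₗ ((f.restrict hp).prodMap (f.restrict hq))
      ∘ₗ (e.symm : E →ₗ[ℂ] p × q) := by
    have key : f ∘ₗ (e : p × q →ₗ[ℂ] E)
        = (e : p × q →ₗ[ℂ] E) ∘ₗ ((f.restrict hp).prodMap (f.restrict hq)) := by
      apply LinearMap.ext
      rintro ⟨x, y⟩
      simp [e, LinearMap.restrict_apply]
    rw [← LinearMap.comp_assoc, ← key]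
    ext x
    simp
  conv_lhs => rw [hf, LinearMap.det_conj, detProdMap]

private lemma restrictEq {E : Type} [AddCommGroup E] [Module ℂ E]
    {p : Submodule ℂ E} {f g : E →ₗ[ℂ] E}
    (hf : ∀ x ∈ p, f x ∈ p) (hg : ∀ x ∈ p, g x ∈ p)
    (h : ∀ x ∈ p, f x = g x) : f.restrict hf = g.restrict hg := by
  apply LinearMap.ext
  rintro ⟨x, hx⟩
  apply Subtype.ext
  simpa [LinearMap.restrict_apply] using h x hx





/-- Let `(C^•, d, δ)` be a finite bi-graded complex of finite-dimensional
complex vector spaces whose combinatorial Laplacian `Δ j` is bijective for `j = 0, …, n`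
(here `δ j : C (j+1) →ₗ C j` is the paper's `δ_{j+1}`). Then for every `j = 0, …, n`,
`det (Δ j) = det (d_{j-1} ∘ δ_j |_{im d_{j-1}}) · det (δ_{j+1} ∘ d_j |_{im δ_{j+1}})`,
where both composites preserve the indicated subspaces; at degree `0` the subspace
`im d_{-1}` is the zero space and the corresponding determinant is `1`. -/
theorem det_laplacian_factorization_of_laplacian_bijective
    (n : ℕ) (C : ℕ → Type) [∀ j, AddCommGroup (C j)] [∀ j, Module ℂ (C j)]
    [∀ j, FiniteDimensional ℂ (C j)]
    (hC : ∀ j, n < j → Subsingleton (C j))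
    (d : ∀ j, C j →ₗ[ℂ] C (j + 1)) (δ : ∀ j, C (j + 1) →ₗ[ℂ] C j)
    (hd : ∀ j, (d (j + 1)).comp (d j) = 0)
    (hδ : ∀ j, (δ j).comp (δ (j + 1)) = 0)
    (Δ : ∀ j, C j →ₗ[ℂ] C j)
    (hΔ0 : Δ 0 = (δ 0).comp (d 0))
    (hΔsucc : ∀ j, Δ (j + 1) = (δ (j + 1)).comp (d (j + 1)) + (d j).comp (δ j))
    (hbij : ∀ j, j ≤ n → Function.Bijective ⇑(Δ j)) :
    (∀ x ∈ LinearMap.range (δ 0), ((δ 0).comp (d 0)) x ∈ LinearMap.range (δ 0)) ∧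
    (∀ (h : ∀ x ∈ LinearMap.range (δ 0), ((δ 0).comp (d 0)) x ∈ LinearMap.range (δ 0)),
      LinearMap.det (Δ 0) = 1 * LinearMap.det (((δ 0).comp (d 0)).restrict h)) ∧
    ∀ j, j + 1 ≤ n →
      (∀ x ∈ LinearMap.range (d j), ((d j).comp (δ j)) x ∈ LinearMap.range (d j)) ∧
      (∀ x ∈ LinearMap.range (δ (j + 1)),
        ((δ (j + 1)).comp (d (j + 1))) x ∈ LinearMap.range (δ (j + 1))) ∧
      ∀ (h1 : ∀ x ∈ LinearMap.range (d j), ((d j).comp (δ j)) x ∈ LinearMap.range (d j))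
        (h2 : ∀ x ∈ LinearMap.range (δ (j + 1)),
          ((δ (j + 1)).comp (d (j + 1))) x ∈ LinearMap.range (δ (j + 1))),
        LinearMap.det (Δ (j + 1)) =
          LinearMap.det (((d j).comp (δ j)).restrict h1) *
            LinearMap.det (((δ (j + 1)).comp (d (j + 1))).restrict h2) := by
  
  refine ⟨fun x _ => ⟨d 0 x, rfl⟩, ?_, ?_⟩
  · intro h
    have hsurj := (hbij 0 (Nat.zero_le n)).2
    have h1 : (⊤ : Submodule ℂ (C 0)) ≤ LinearMap.range (δ 0) := by
      rw [← LinearMap.range_eq_top.mpr hsurj, hΔ0]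
      exact LinearMap.range_comp_le_range _ _
    rw [one_mul, detRestrictTop (le_antisymm le_top h1), hΔ0]
  · intro j hj
    refine ⟨fun x _ => ⟨δ j x, rfl⟩, fun x _ => ⟨d (j+1) x, rfl⟩, ?_⟩
    intro h1 h2
    set p := LinearMap.range (d j) with hp'
    set q := LinearMap.range (δ (j+1)) with hq'
    have hdd : ∀ y : C j, d (j+1) (d j y) = 0 := fun y => by
      simpa using DFunLike.congr_fun (hd j) y
    have hδδ : ∀ y : C (j+2), δ j (δ (j+1) y) = 0 := fun y => by
      simpa using DFunLike.congr_fun (hδ j) y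
    have hΔp : ∀ x ∈ p, Δ (j+1) x = ((d j).comp (δ j)) x := by
      rintro x ⟨y, rfl⟩
      rw [hΔsucc]
      simp [hdd y]
    have hΔq : ∀ x ∈ q, Δ (j+1) x = ((δ (j+1)).comp (d (j+1))) x := by
      rintro x ⟨y, rfl⟩
      rw [hΔsucc]
      simp [hδδ y]
    have hΔp' : ∀ x ∈ p, Δ (j+1) x ∈ p := fun x hx => by
      rw [hΔp x hx]; exact ⟨δ j x, rfl⟩
    have hΔq' : ∀ x ∈ q, Δ (j+1) x ∈ q := fun x hx => by
      rw [hΔq x hx]; exact ⟨d (j+1) x, rfl⟩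
    have hdisj : Disjoint p q := by
      rw [Submodule.disjoint_def]
      rintro x ⟨y, rfl⟩ hxq
      obtain ⟨z, hz⟩ := hxq
      refine (hbij (j+1) hj).1 ?_
      rw [map_zero, hΔsucc]
      simp only [LinearMap.add_apply, LinearMap.comp_apply]
      rw [hdd y, ← hz, hδδ z]
      simp
    have hco : Codisjoint p q := by
      rw [codisjoint_iff, eq_top_iff]
      intro x _
      obtain ⟨y, hy⟩ := (hbij (j+1) hj).2 x
      rw [← hy, hΔsucc]
      simp only [LinearMap.add_apply, LinearMap.comp_apply]
      exact Submodule.add_mem _ (Submodule.mem_sup_right ⟨_, rfl⟩)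
        (Submodule.mem_sup_left ⟨_, rfl⟩)
    rw [detIsCompl ⟨hdisj, hco⟩ (Δ (j+1)) hΔp' hΔq',
      restrictEq hΔp' h1 hΔp, restrictEq hΔq' h2 hΔq]
end

section
/- Let (C^•, d, δ) be a finite bi-graded complex of finite-dimensional complex vector spaces whose combinatorial Laplacian Δ_j is bijective for every j = 0, …, n. Then the torsion-type product of determinants satisfies ∏_{j=0}^{n} det(Δ_j)^{(−1)^{j+1} j} = ∏_{j=1}^{n} det(d_{j−1} ∘ δ_j |_{im d_{j−1}})^{(−1)^{j+1}}, where each composite d_{j−1} ∘ δ_j preserves the subspace im d_{j−1} ⊆ C^j. -/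
open LinearMap

private lemma my_det_prodMap {M N : Type*} [AddCommGroup M] [Module ℂ M] [FiniteDimensional ℂ M]
    [AddCommGroup N] [Module ℂ N] [FiniteDimensional ℂ N]
    (f : M →ₗ[ℂ] M) (g : N →ₗ[ℂ] N) :
    LinearMap.det (f.prodMap g) = LinearMap.det f * LinearMap.det g := by
  classical
  let bM := Module.finBasis ℂ M
  let bN := Module.finBasis ℂ N
  rw [← LinearMap.det_toMatrix (bM.prod bN), LinearMap.toMatrix_prodMap,
    Matrix.det_fromBlocks_zero₁₂, LinearMap.det_toMatrix, LinearMap.det_toMatrix]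

private lemma my_det_conj_of_comm {M N : Type*} [AddCommGroup M] [Module ℂ M]
    [AddCommGroup N] [Module ℂ N]
    (e : M ≃ₗ[ℂ] N) (f : M →ₗ[ℂ] M) (g : N →ₗ[ℂ] N)
    (hcomm : ∀ x, g (e x) = e (f x)) : LinearMap.det g = LinearMap.det f := by
  have hg : g = (e : M →ₗ[ℂ] N) ∘ₗ f ∘ₗ (e.symm : N →ₗ[ℂ] M) := by
    ext y
    have := hcomm (e.symm y)
    simp only [LinearEquiv.apply_symm_apply] at this
    simpa using this
  rw [hg, LinearMap.det_conj]

private lemma my_det_isCompl {M : Type*} [AddCommGroup M] [Module ℂ M]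
    [FiniteDimensional ℂ M] (p q : Submodule ℂ M) (hpq : IsCompl p q)
    (f : M →ₗ[ℂ] M) (hp : ∀ x ∈ p, f x ∈ p) (hq : ∀ x ∈ q, f x ∈ q) :
    LinearMap.det f = LinearMap.det (f.restrict hp) * LinearMap.det (f.restrict hq) := by
  rw [← my_det_prodMap]
  exact my_det_conj_of_comm (Submodule.prodEquivOfIsCompl p q hpq) _ f (by
    rintro ⟨x, y⟩
    simp [Submodule.coe_prodEquivOfIsCompl', LinearMap.restrict_apply, map_add])

private lemma my_prod_telescope (n : ℕ) (t D : ℕ → ℂ) (ht : ∀ j ≤ n, t j ≠ 0)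
    (hD : ∀ j < n, D (j + 1) = t j * t (j + 1)) :
    ∏ j ∈ Finset.range (n + 1), D j ^ ((-1 : ℤ) ^ (j + 1) * (j : ℤ)) =
      (∏ j ∈ Finset.range n, t j ^ ((-1 : ℤ) ^ j)) *
        t n ^ ((-1 : ℤ) ^ (n + 1) * (n : ℤ)) := by
  induction n with
  | zero => simp
  | succ n ih =>
    rw [Finset.prod_range_succ, ih (fun j hj => ht j (by omega)) (fun j hj => hD j (by omega)),
      Finset.prod_range_succ, hD n (by omega), mul_zpow, mul_assoc, mul_assoc]
    congr 1
    rw [← mul_assoc, ← zpow_add₀ (ht n (by omega))]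
    congr 2
    push_cast
    ring


/-- Let `(C^•, d, δ)` be a finite bi-graded complex of finite-dimensional
complex vector spaces whose combinatorial Laplacian `Δ j` is bijective for `j = 0, …, n`
(here `δ j : C (j+1) →ₗ C j` is the paper's `δ_{j+1}`). Then
`∏_{j=0}^{n} det (Δ_j) ^ ((-1)^{j+1} j) = ∏_{j=1}^{n} det (d_{j-1} ∘ δ_j |_{im d_{j-1}}) ^ ((-1)^{j+1})`,
where each composite `d_{j-1} ∘ δ_j` preserves the subspace `im d_{j-1} ⊆ C^j`.
(The right-hand product over `j = 1, …, n` is reindexed as a product over `j ∈ range n`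
of the factor at degree `j + 1`, with exponent `(-1)^{(j+1)+1}`.) -/
theorem torsion_product_det_laplacian
    (n : ℕ) (C : ℕ → Type) [∀ j, AddCommGroup (C j)] [∀ j, Module ℂ (C j)]
    [∀ j, FiniteDimensional ℂ (C j)]
    (hC : ∀ j, n < j → Subsingleton (C j))
    (d : ∀ j, C j →ₗ[ℂ] C (j + 1)) (δ : ∀ j, C (j + 1) →ₗ[ℂ] C j)
    (hd : ∀ j, (d (j + 1)).comp (d j) = 0)
    (hδ : ∀ j, (δ j).comp (δ (j + 1)) = 0)
    (Δ : ∀ j, C j →ₗ[ℂ] C j)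
    (hΔ0 : Δ 0 = (δ 0).comp (d 0))
    (hΔsucc : ∀ j, Δ (j + 1) = (δ (j + 1)).comp (d (j + 1)) + (d j).comp (δ j))
    (hbij : ∀ j, j ≤ n → Function.Bijective ⇑(Δ j)) :
    (∀ j, ∀ x ∈ LinearMap.range (d j), ((d j).comp (δ j)) x ∈ LinearMap.range (d j)) ∧
    ∀ (h : ∀ j, ∀ x ∈ LinearMap.range (d j), ((d j).comp (δ j)) x ∈ LinearMap.range (d j)),
      ∏ j ∈ Finset.range (n + 1), LinearMap.det (Δ j) ^ ((-1 : ℤ) ^ (j + 1) * (j : ℤ)) =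
        ∏ j ∈ Finset.range n,
          LinearMap.det (((d j).comp (δ j)).restrict (h j)) ^ ((-1 : ℤ) ^ (j + 1 + 1)) := by
  classical
  refine ⟨fun j x _ => ⟨δ j x, rfl⟩, fun h => ?_⟩
  -- basic pointwise facts
  have hd' : ∀ k (x : C k), d (k+1) (d k x) = 0 := by
    intro k x
    have := congrArg (fun f => f x) (hd k); simpa using this
  have hδ' : ∀ k (y : C (k+2)), δ k (δ (k+1) y) = 0 := by
    intro k y
    have := congrArg (fun f => f y) (hδ k); simpa using this
  have fact1 : ∀ k (y : C (k+1)), Δ k (δ k y) = δ k (d k (δ k y)) := by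
    intro k y
    match k with
    | 0 => rw [hΔ0]; rfl
    | (k+1) =>
      rw [hΔsucc k]
      simp [LinearMap.add_apply, LinearMap.comp_apply, hδ' k y]
  have fact2 : ∀ k (x : C k), Δ (k+1) (d k x) = d k (δ k (d k x)) := by
    intro k x
    rw [hΔsucc k]
    simp [LinearMap.add_apply, LinearMap.comp_apply, hd' k x]
  have fact3 : ∀ k (z : C k), d k (Δ k z) = d k (δ k (d k z)) := by
    intro k z
    match k with
    | 0 => rw [hΔ0]; rfl
    | (k+1) =>
      rw [hΔsucc k]
      simp [LinearMap.add_apply, LinearMap.comp_apply, map_add, hd' k (δ k z)]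
  have hAq : ∀ k, ∀ x ∈ LinearMap.range (δ k),
      ((δ k).comp (d k)) x ∈ LinearMap.range (δ k) := fun k x _ => ⟨d k x, rfl⟩
  -- conjugation: det (A k restricted to range δ k) = det (B k restricted to range d k)
  have hconj : ∀ k, k ≤ n → LinearMap.det (((δ k).comp (d k)).restrict (hAq k)) =
      LinearMap.det (((d k).comp (δ k)).restrict (h k)) := by
    intro k hk
    have hmap : ∀ x ∈ LinearMap.range (δ k), d k x ∈ LinearMap.range (d k) :=
      fun x _ => ⟨x, rfl⟩
    set φ : ↥(LinearMap.range (δ k)) →ₗ[ℂ] ↥(LinearMap.range (d k)) := (d k).restrict hmap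
      with hφ
    have hker : ∀ v, v ∈ LinearMap.range (δ k) → d k v = 0 → v = 0 := by
      rintro v ⟨y, rfl⟩ hv
      have h1 : Δ k (δ k y) = 0 := by rw [fact1 k y, hv, map_zero]
      exact (hbij k hk).1 (by rw [h1, map_zero])
    have hinj : Function.Injective φ := by
      intro a b hab
      have hval : d k ((a : C k)) = d k ((b : C k)) := congrArg Subtype.val hab
      have hsub : d k ((a : C k) - b) = 0 := by rw [map_sub, hval, sub_self]
      have := hker _ (Submodule.sub_mem _ a.2 b.2) hsub
      exact Subtype.ext (by rwa [sub_eq_zero] at this)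
    have hsurj : Function.Surjective φ := by
      rintro ⟨w, x, rfl⟩
      obtain ⟨z, hz⟩ := (hbij k hk).2 x
      refine ⟨⟨δ k (d k z), ⟨d k z, rfl⟩⟩, Subtype.ext ?_⟩
      show d k (δ k (d k z)) = d k x
      rw [← fact3 k z, hz]
    refine (my_det_conj_of_comm (LinearEquiv.ofBijective φ ⟨hinj, hsurj⟩) _ _ ?_).symm
    rintro ⟨v, hv⟩
    refine Subtype.ext ?_
    show ((d k).comp (δ k)) (d k v) = d k (((δ k).comp (d k)) v)
    simp [LinearMap.comp_apply]
  -- splitting: det Δ (j+1) = det (B j restricted) * det (A (j+1) restricted)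
  have hdetΔ : ∀ j, j < n → LinearMap.det (Δ (j+1)) =
      LinearMap.det (((d j).comp (δ j)).restrict (h j)) *
      LinearMap.det (((δ (j+1)).comp (d (j+1))).restrict (hAq (j+1))) := by
    intro j hj
    have hbj := hbij (j+1) hj
    have hΔp : ∀ x ∈ LinearMap.range (d j), Δ (j+1) x ∈ LinearMap.range (d j) := by
      rintro x ⟨y, rfl⟩; rw [fact2 j y]; exact ⟨δ j (d j y), rfl⟩
    have hΔq : ∀ x ∈ LinearMap.range (δ (j+1)), Δ (j+1) x ∈ LinearMap.range (δ (j+1)) := by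
      rintro x ⟨y, rfl⟩; rw [fact1 (j+1) y]; exact ⟨_, rfl⟩
    have hcompl : IsCompl (LinearMap.range (d j)) (LinearMap.range (δ (j+1))) := by
      constructor
      · rw [Submodule.disjoint_def]
        rintro x ⟨a, rfl⟩ hq
        obtain ⟨b, hb⟩ := hq
        have hzero : Δ (j+1) (d j a) = 0 := by
          rw [hΔsucc j]
          simp only [LinearMap.add_apply, LinearMap.comp_apply]
          rw [hd' j a, map_zero, ← hb, hδ' j b, map_zero, add_zero]
        exact hbj.1 (by rw [hzero, map_zero])
      · rw [codisjoint_iff, eq_top_iff]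
        rintro x -
        obtain ⟨z, rfl⟩ := hbj.2 x
        rw [hΔsucc j]
        refine Submodule.mem_sup.mpr ⟨d j (δ j z), ⟨_, rfl⟩, δ (j+1) (d (j+1) z), ⟨_, rfl⟩, ?_⟩
        simp [LinearMap.add_apply, LinearMap.comp_apply, add_comm]
    rw [my_det_isCompl _ _ hcompl (Δ (j+1)) hΔp hΔq]
    congr 1
    · have : (Δ (j+1)).restrict hΔp = ((d j).comp (δ j)).restrict (h j) := by
        ext x
        obtain ⟨x, hx⟩ := x
        obtain ⟨y, rfl⟩ := hx
        simpa [LinearMap.restrict_apply] using fact2 j y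
      rw [this]
    · have : (Δ (j+1)).restrict hΔq = ((δ (j+1)).comp (d (j+1))).restrict (hAq (j+1)) := by
        ext x
        obtain ⟨x, hx⟩ := x
        obtain ⟨y, rfl⟩ := hx
        simpa [LinearMap.restrict_apply] using fact1 (j+1) y
      rw [this]
  set T : ℕ → ℂ := fun j => LinearMap.det (((d j).comp (δ j)).restrict (h j)) with hT
  have hTn : T n = 1 := by
    have hs : Subsingleton (C (n+1)) := hC (n+1) (by omega)
    have : Subsingleton ↥(LinearMap.range (d n)) :=
      ⟨fun a b => Subtype.ext (Subsingleton.elim _ _)⟩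
    exact LinearMap.det_eq_one_of_subsingleton _
  have hDfact : ∀ j, j < n → LinearMap.det (Δ (j+1)) = T j * T (j+1) := by
    intro j hj
    rw [hT]
    rw [hdetΔ j hj, hconj (j+1) hj]
  have hdetΔne : ∀ k, k ≤ n → LinearMap.det (Δ k) ≠ 0 := by
    intro k hk
    have := (LinearEquiv.ofBijective (Δ k) (hbij k hk)).isUnit_det'
    have e : ((LinearEquiv.ofBijective (Δ k) (hbij k hk)) : C k →ₗ[ℂ] C k) = Δ k :=
      LinearMap.ext fun _ => rfl
    rw [e] at this
    simpa using this.ne_zero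
  have hTne : ∀ j, j ≤ n → T j ≠ 0 := by
    intro j hj
    rcases Nat.eq_or_lt_of_le hj with rfl | hlt
    · rw [hTn]; exact one_ne_zero
    · have hne := hdetΔne (j+1) hlt
      rw [hDfact j hlt] at hne
      exact left_ne_zero_of_mul hne
  calc ∏ j ∈ Finset.range (n+1), LinearMap.det (Δ j) ^ ((-1:ℤ)^(j+1) * (j:ℤ))
      = (∏ j ∈ Finset.range n, T j ^ ((-1:ℤ)^j)) * T n ^ ((-1:ℤ)^(n+1) * (n:ℤ)) :=
        my_prod_telescope n T (fun j => LinearMap.det (Δ j)) hTne hDfact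
    _ = ∏ j ∈ Finset.range n, T j ^ ((-1:ℤ)^(j+1+1)) := by
        rw [hTn, one_zpow, mul_one]
        refine Finset.prod_congr rfl fun j _ => ?_
        congr 1
        ring
end

section
/- Let (C^•, d, δ) be a finite bi-graded complex of finite-dimensional complex vector spaces, and let P_j : C^j → C^j be linear projections (P_j ∘ P_j = P_j) commuting with both differentials, i.e. P_{j+1} ∘ d_j = d_j ∘ P_j and P_{j−1} ∘ δ_j = δ_j ∘ P_j for all j. If Δ_j restricted to ker P_j is bijective for every j = 0, …, n, then the subcomplex (ker P^•, δ) is acyclic (its homology vanishes in every degree), and the inclusions im P_j ↪ C^j induce isomorphisms H_j(im P^•, δ) ≅ H_j(C^•, δ) for every j. -/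
/-- Let `(C^•, d, δ)` be a finite bi-graded complex of finite-dimensional
complex vector spaces (here `δ j : C (j+1) →ₗ C j` is the paper's `δ_{j+1}`, and `C^j = 0` for
`j > n`), and let `P j : C^j → C^j` be linear projections commuting with both differentials.
If `Δ j` restricted to `ker (P j)` is bijective for every `j = 0, …, n` (expressed as
`Set.BijOn`), then the subcomplex `(ker P, δ)` is acyclic in every degree (degree `0`: since
`δ₀ = 0` there, `ker P₀ = δ₁ (ker P₁)`; degree `j+1 ≤ n`: `ker δ_{j+1} ∩ ker P_{j+1} =
δ_{j+2} (ker P_{j+2})`), and the inclusions `im P_j ↪ C^j` induce isomorphisms on homology: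
for each degree there is a linear equivalence `e` from the homology of the subcomplex `im P`
(cycles modulo boundaries `δ (range P)`) to the homology of `C^•` (cycles `ker δ` — all of
`C^0` in degree `0` — modulo boundaries `range δ`) sending the class of a cycle `x` of the
subcomplex to the class of `x` itself. -/
theorem subcomplex_ker_delta_acyclic_and_image_computes_homology
    (n : ℕ) (C : ℕ → Type) [∀ j, AddCommGroup (C j)] [∀ j, Module ℂ (C j)]
    [∀ j, FiniteDimensional ℂ (C j)]
    (hC : ∀ j, n < j → Subsingleton (C j))
    (d : ∀ j, C j →ₗ[ℂ] C (j + 1)) (δ : ∀ j, C (j + 1) →ₗ[ℂ] C j)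
    (hd : ∀ j, (d (j + 1)).comp (d j) = 0)
    (hδ : ∀ j, (δ j).comp (δ (j + 1)) = 0)
    (Δ : ∀ j, C j →ₗ[ℂ] C j)
    (hΔ0 : Δ 0 = (δ 0).comp (d 0))
    (hΔsucc : ∀ j, Δ (j + 1) = (δ (j + 1)).comp (d (j + 1)) + (d j).comp (δ j))
    (P : ∀ j, C j →ₗ[ℂ] C j)
    (hP : ∀ j, (P j).comp (P j) = P j)
    (hPd : ∀ j, (P (j + 1)).comp (d j) = (d j).comp (P j))
    (hPδ : ∀ j, (P j).comp (δ j) = (δ j).comp (P (j + 1)))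
    (hbijker : ∀ j, j ≤ n →
      Set.BijOn ⇑(Δ j) (LinearMap.ker (P j) : Set (C j)) (LinearMap.ker (P j) : Set (C j))) :
    (LinearMap.ker (P 0) = Submodule.map (δ 0) (LinearMap.ker (P 1))) ∧
    (∀ j, j + 1 ≤ n →
      LinearMap.ker (δ j) ⊓ LinearMap.ker (P (j + 1)) =
        Submodule.map (δ (j + 1)) (LinearMap.ker (P (j + 2)))) ∧
    (∃ e : (↥(LinearMap.range (P 0)) ⧸
              Submodule.comap (LinearMap.range (P 0)).subtype
                (Submodule.map (δ 0) (LinearMap.range (P 1))))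
            ≃ₗ[ℂ] (C 0 ⧸ LinearMap.range (δ 0)),
      ∀ x : ↥(LinearMap.range (P 0)),
        e (Submodule.Quotient.mk x) = Submodule.Quotient.mk (x : C 0)) ∧
    (∀ j, j + 1 ≤ n →
      ∃ e : (↥(LinearMap.ker (δ j) ⊓ LinearMap.range (P (j + 1))) ⧸
              Submodule.comap
                (LinearMap.ker (δ j) ⊓ LinearMap.range (P (j + 1))).subtype
                (Submodule.map (δ (j + 1)) (LinearMap.range (P (j + 2)))))
            ≃ₗ[ℂ] (↥(LinearMap.ker (δ j)) ⧸
              Submodule.comap (LinearMap.ker (δ j)).subtype (LinearMap.range (δ (j + 1)))),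
        ∀ (x : ↥(LinearMap.ker (δ j) ⊓ LinearMap.range (P (j + 1))))
          (hx : (x : C (j + 1)) ∈ LinearMap.ker (δ j)),
          e (Submodule.Quotient.mk x) =
            Submodule.Quotient.mk (⟨(x : C (j + 1)), hx⟩ : ↥(LinearMap.ker (δ j)))) := by
  -- pointwise versions of hypotheses
  have hPd' : ∀ j (x : C j), P (j + 1) (d j x) = d j (P j x) :=
    fun j x => LinearMap.congr_fun (hPd j) x
  have hPδ' : ∀ j (x : C (j + 1)), P j (δ j x) = δ j (P (j + 1) x) :=
    fun j x => LinearMap.congr_fun (hPδ j) x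
  have hδδ : ∀ j (x : C (j + 2)), δ j (δ (j + 1) x) = 0 :=
    fun j x => LinearMap.congr_fun (hδ j) x
  have hfix : ∀ j (x : C j), x ∈ LinearMap.range (P j) → P j x = x := by
    intro j x hx
    obtain ⟨y, rfl⟩ := hx
    exact LinearMap.congr_fun (hP j) y
  -- acyclicity in degree 0
  have acy0 : LinearMap.ker (P 0) = Submodule.map (δ 0) (LinearMap.ker (P 1)) := by
    apply le_antisymm
    · intro x hx
      obtain ⟨z, hz, hΔz⟩ := (hbijker 0 (Nat.zero_le n)).surjOn hx
      refine ⟨d 0 z, ?_, ?_⟩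
      · show P 1 (d 0 z) = 0
        rw [hPd' 0 z, LinearMap.mem_ker.mp hz, map_zero]
      · have : Δ 0 z = x := hΔz
        rwa [hΔ0] at this
    · rintro x ⟨y, hy, rfl⟩
      show P 0 (δ 0 y) = 0
      rw [hPδ' 0 y, LinearMap.mem_ker.mp hy, map_zero]
  -- acyclicity in higher degrees
  have acyS : ∀ j, j + 1 ≤ n →
      LinearMap.ker (δ j) ⊓ LinearMap.ker (P (j + 1)) =
        Submodule.map (δ (j + 1)) (LinearMap.ker (P (j + 2))) := by
    intro j hj
    apply le_antisymm
    · rintro x ⟨hxδ, hxP⟩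
      obtain ⟨z, hz, hΔz⟩ := (hbijker (j + 1) hj).surjOn hxP
      have hΔz' : δ (j + 1) (d (j + 1) z) + d j (δ j z) = x := by
        have : Δ (j + 1) z = x := hΔz
        rwa [hΔsucc j] at this
      -- show δ j z = 0 using injectivity of Δ j on ker (P j)
      have hwker : δ j z ∈ LinearMap.ker (P j) := by
        show P j (δ j z) = 0
        rw [hPδ' j z, LinearMap.mem_ker.mp hz, map_zero]
      have hδx : δ j x = 0 := hxδ
      have hkey : δ j (d j (δ j z)) = 0 := by
        have := congrArg (δ j) hΔz'
        rw [map_add, hδδ j (d (j + 1) z), zero_add, hδx] at this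
        exact this
      have hΔw : Δ j (δ j z) = 0 := by
        match j with
        | 0 => rw [hΔ0]; exact hkey
        | k + 1 =>
          rw [hΔsucc k]
          simp only [LinearMap.add_apply, LinearMap.comp_apply]
          rw [hkey, hδδ k z, map_zero, add_zero]
      have hw0 : δ j z = 0 := by
        have h0mem : (0 : C j) ∈ (LinearMap.ker (P j) : Set (C j)) := by
          simp [LinearMap.mem_ker]
        have := (hbijker j (Nat.le_of_succ_le hj)).injOn hwker h0mem
          (by rw [hΔw, map_zero])
        exact this
      refine ⟨d (j + 1) z, ?_, ?_⟩
      · show P (j + 2) (d (j + 1) z) = 0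
        rw [hPd' (j + 1) z, LinearMap.mem_ker.mp hz, map_zero]
      · rw [← hΔz', hw0, map_zero, add_zero]
    · rintro x ⟨y, hy, rfl⟩
      constructor
      · exact hδδ j y
      · show P (j + 1) (δ (j + 1) y) = 0
        rw [hPδ' (j + 1) y, LinearMap.mem_ker.mp hy, map_zero]
  refine ⟨acy0, acyS, ?_, ?_⟩
  · -- isomorphism in degree 0
    set R0 := LinearMap.range (P 0) with hR0
    set S := Submodule.comap R0.subtype (Submodule.map (δ 0) (LinearMap.range (P 1))) with hS
    set f : ↥R0 →ₗ[ℂ] C 0 ⧸ LinearMap.range (δ 0) :=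
      (LinearMap.range (δ 0)).mkQ.comp R0.subtype with hf
    have hSf : S ≤ LinearMap.ker f := by
      rintro x ⟨y, -, hy⟩
      show f x = 0
      simp only [hf, LinearMap.comp_apply, Submodule.mkQ_apply]
      rw [Submodule.Quotient.mk_eq_zero]
      exact ⟨y, hy⟩
    have hker : LinearMap.ker f ≤ S := by
      intro x hx
      have hx' : (x : C 0) ∈ LinearMap.range (δ 0) := by
        have : f x = 0 := hx
        simpa [hf, Submodule.Quotient.mk_eq_zero] using this
      obtain ⟨y, hy⟩ := hx'
      refine ⟨P 1 y, ⟨y, rfl⟩, ?_⟩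
      show δ 0 (P 1 y) = (x : C 0)
      rw [← hPδ' 0 y, hy, hfix 0 _ x.2]
    set g := S.liftQ f hSf with hg
    have hinj : Function.Injective g := by
      rw [← LinearMap.ker_eq_bot]
      exact Submodule.ker_liftQ_eq_bot S f hSf hker
    have hsurj : Function.Surjective g := by
      intro z
      obtain ⟨c, rfl⟩ := Submodule.Quotient.mk_surjective _ z
      refine ⟨Submodule.Quotient.mk ⟨P 0 c, ⟨c, rfl⟩⟩, ?_⟩
      show f ⟨P 0 c, _⟩ = Submodule.Quotient.mk c
      simp only [hf, LinearMap.comp_apply, Submodule.mkQ_apply, Submodule.subtype_apply]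
      rw [Submodule.Quotient.eq]
      have : P 0 c - c ∈ LinearMap.ker (P 0) := by
        show P 0 (P 0 c - c) = 0
        have h2 : P 0 (P 0 c) = P 0 c := LinearMap.congr_fun (hP 0) c
        rw [map_sub, h2, sub_self]
      rw [acy0] at this
      obtain ⟨y, -, hy⟩ := this
      exact ⟨y, hy⟩
    exact ⟨LinearEquiv.ofBijective g ⟨hinj, hsurj⟩, fun x => rfl⟩
  · -- isomorphisms in higher degrees
    intro j hj
    set M := LinearMap.ker (δ j) with hM
    set R := LinearMap.ker (δ j) ⊓ LinearMap.range (P (j + 1)) with hR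
    set Q := Submodule.comap M.subtype (LinearMap.range (δ (j + 1))) with hQ
    set S := Submodule.comap R.subtype
      (Submodule.map (δ (j + 1)) (LinearMap.range (P (j + 2)))) with hS
    have hRM : R ≤ M := inf_le_left
    set f : ↥R →ₗ[ℂ] ↥M ⧸ Q := Q.mkQ.comp (Submodule.inclusion hRM) with hf
    have hSf : S ≤ LinearMap.ker f := by
      rintro x ⟨y, -, hy⟩
      show f x = 0
      simp only [hf, LinearMap.comp_apply, Submodule.mkQ_apply]
      rw [Submodule.Quotient.mk_eq_zero]
      exact ⟨y, hy⟩
    have hker : LinearMap.ker f ≤ S := by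
      intro x hx
      have hx' : (x : C (j + 1)) ∈ LinearMap.range (δ (j + 1)) := by
        have : f x = 0 := hx
        simp only [hf, LinearMap.comp_apply, Submodule.mkQ_apply,
          Submodule.Quotient.mk_eq_zero] at this
        exact this
      obtain ⟨y, hy⟩ := hx'
      refine ⟨P (j + 2) y, ⟨y, rfl⟩, ?_⟩
      show δ (j + 1) (P (j + 2) y) = (x : C (j + 1))
      rw [← hPδ' (j + 1) y, hy, hfix (j + 1) _ x.2.2]
    set g := S.liftQ f hSf with hg
    have hinj : Function.Injective g := by
      rw [← LinearMap.ker_eq_bot]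
      exact Submodule.ker_liftQ_eq_bot S f hSf hker
    have hsurj : Function.Surjective g := by
      intro z
      obtain ⟨m, rfl⟩ := Submodule.Quotient.mk_surjective _ z
      have hPm : P (j + 1) (m : C (j + 1)) ∈ R := by
        refine ⟨?_, ⟨(m : C (j + 1)), rfl⟩⟩
        show δ j (P (j + 1) (m : C (j + 1))) = 0
        rw [← hPδ' j (m : C (j + 1)), LinearMap.mem_ker.mp m.2, map_zero]
      refine ⟨Submodule.Quotient.mk ⟨P (j + 1) (m : C (j + 1)), hPm⟩, ?_⟩
      show f ⟨P (j + 1) (m : C (j + 1)), hPm⟩ = Submodule.Quotient.mk m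
      simp only [hf, LinearMap.comp_apply, Submodule.mkQ_apply]
      rw [Submodule.Quotient.eq]
      have hdiff : P (j + 1) (m : C (j + 1)) - (m : C (j + 1)) ∈
          LinearMap.ker (δ j) ⊓ LinearMap.ker (P (j + 1)) := by
        constructor
        · show δ j _ = 0
          rw [map_sub, LinearMap.mem_ker.mp m.2, ← hPδ' j (m : C (j + 1)),
            LinearMap.mem_ker.mp m.2, map_zero, sub_self]
        · show P (j + 1) _ = 0
          have h2 : P (j + 1) (P (j + 1) (m : C (j + 1))) = P (j + 1) (m : C (j + 1)) :=
            LinearMap.congr_fun (hP (j + 1)) (m : C (j + 1))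
          rw [map_sub, h2, sub_self]
      rw [acyS j hj] at hdiff
      obtain ⟨y, -, hy⟩ := hdiff
      exact ⟨y, hy⟩
    refine ⟨LinearEquiv.ofBijective g ⟨hinj, hsurj⟩, fun x hx => rfl⟩
end
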